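/- Let B be an integral domain of characteristic zero with a locally nilpotent derivation δ and A = Ker δ. Suppose the quotient extension A ⊆ B makes B a faithfully flat A-module, and let a₁, a₂ ∈ δ(B) ∩ A be nonzero elements of the plinth ideal in a UFD A. Then gcd(a₁, a₂) ∈ δ(B) ∩ A. -/

import Mathlib

open TensorProduct in
/-- Purity: if `B` is a faithfully flat `A`-module (with `B` an `A`-algebra), then
for any `A`-module `N`, the map `N → B ⊗[A] N`, `x ↦ 1 ⊗ x`, is injective at `0`. -/
lemma aux_pure_of_faithfullyFlat {A B : Type*} [CommRing A] [CommRing B] [Algebra A B]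
    [Module.FaithfullyFlat A B] {N : Type*} [AddCommGroup N] [Module A N]
    (x : N) (h : (1 : B) ⊗ₜ[A] x = 0) : x = 0 := by
  by_contra hx
  set L := Submodule.span A ({x} : Set N) with hL
  have hxL : x ∈ L := Submodule.mem_span_singleton_self x
  have hinj : Function.Injective (LinearMap.lTensor B L.subtype) :=
    Module.Flat.lTensor_preserves_injective_linearMap _ L.injective_subtype
  have hξ : (1 : B) ⊗ₜ[A] (⟨x, hxL⟩ : L) = 0 := by
    apply hinj
    simpa using h
  have hall : ∀ z : B ⊗[A] L, z = 0 := by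
    intro z
    induction z using TensorProduct.induction_on with
    | zero => rfl
    | tmul b l =>
      obtain ⟨a, ha⟩ := Submodule.mem_span_singleton.mp l.2
      have hl : l = a • (⟨x, hxL⟩ : L) := Subtype.ext (by simpa using ha.symm)
      have : b ⊗ₜ[A] l = a • (b • ((1 : B) ⊗ₜ[A] (⟨x, hxL⟩ : L))) := by
        rw [hl, TensorProduct.tmul_smul]
        congr 1
        rw [TensorProduct.smul_tmul', smul_eq_mul, mul_one]
      rw [this, hξ, smul_zero, smul_zero]
    | add z₁ z₂ h₁ h₂ => rw [h₁, h₂, add_zero]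
  haveI : Nontrivial L :=
    ⟨⟨⟨x, hxL⟩, 0, fun e => hx (by simpa using congrArg Subtype.val e)⟩⟩
  haveI : Nontrivial (B ⊗[A] L) :=
    Module.FaithfullyFlat.lTensor_nontrivial A B L
  obtain ⟨u, v, huv⟩ := exists_pair_ne (B ⊗[A] L)
  exact huv (by rw [hall u, hall v])

open TensorProduct in
/-- Faithfully flat descent for ideal membership: if `c : A` maps into `I·B`, then `c ∈ I`. -/
lemma aux_mem_of_faithfullyFlat {A B : Type*} [CommRing A] [CommRing B] [Algebra A B]
    [Module.FaithfullyFlat A B] (I : Ideal A) (c : A)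
    (h : algebraMap A B c ∈ I.map (algebraMap A B)) : c ∈ I := by
  rw [← Ideal.Quotient.eq_zero_iff_mem]
  apply aux_pure_of_faithfullyFlat (A := A) (B := B)
  -- rewrite 1 ⊗ mk c as (algebraMap A B c) ⊗ mk 1
  have e1 : (1 : B) ⊗ₜ[A] (Ideal.Quotient.mk I c) = (algebraMap A B c) ⊗ₜ[A] (Ideal.Quotient.mk I 1) := by
    have : Ideal.Quotient.mk I c = c • Ideal.Quotient.mk I 1 := by
      rw [Algebra.smul_def, Ideal.Quotient.algebraMap_eq, ← map_mul, mul_one]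
    rw [this, TensorProduct.tmul_smul, TensorProduct.smul_tmul', Algebra.smul_def, mul_one]
  rw [e1]
  -- now use the explicit expression of `algebraMap A B c` in `I·B`
  have key : ∀ b ∈ I.map (algebraMap A B), b ⊗ₜ[A] (Ideal.Quotient.mk I 1) = 0 := by
    intro b hb
    refine Submodule.span_induction ?_ ?_ ?_ ?_ hb
    · rintro _ ⟨a, haI, rfl⟩
      have : (algebraMap A B a) ⊗ₜ[A] (Ideal.Quotient.mk I 1) = (1 : B) ⊗ₜ[A] (Ideal.Quotient.mk I a) := by
        have h2 : Ideal.Quotient.mk I a = a • Ideal.Quotient.mk I 1 := by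
          rw [Algebra.smul_def, Ideal.Quotient.algebraMap_eq, ← map_mul, mul_one]
        rw [h2, TensorProduct.tmul_smul, TensorProduct.smul_tmul', Algebra.smul_def, mul_one]
      rw [this, Ideal.Quotient.eq_zero_iff_mem.mpr haI, TensorProduct.tmul_zero]
    · exact TensorProduct.zero_tmul _ _
    · intro u v _ _ hu hv
      rw [TensorProduct.add_tmul, hu, hv, add_zero]
    · intro r u _ hu
      rw [← TensorProduct.smul_tmul', hu, smul_zero]
  exact key _ h

universe uR in
/-- Equational criterion for flatness, specialized to a relation `b₂ • t = b₁ • u`. -/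
lemma aux_flat_pair {R M : Type uR} [CommRing R] [AddCommGroup M] [Module R M]
    [Module.Flat R M] (b₁ b₂ : R) (t u : M) (h : b₂ • t = b₁ • u) :
    ∃ (κ : Type uR) (_ : Fintype κ) (p q : κ → R) (z : κ → M),
      (t = ∑ j, p j • z j) ∧ ∀ j, b₂ * p j = b₁ * q j := by
  have hsum : ∑ i : ULift.{uR} (Fin 2), (![b₂, -b₁] i.down) • (![t, u] i.down) = 0 := by
    rw [Fintype.sum_equiv (Equiv.ulift.{uR, 0})
      (fun i : ULift.{uR, 0} (Fin 2) => (![b₂, -b₁] i.down) • (![t, u] i.down))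
      (fun i : Fin 2 => (![b₂, -b₁] i) • (![t, u] i)) (fun i => rfl), Fin.sum_univ_two]
    simp only [Matrix.cons_val_zero, Matrix.cons_val_one, Matrix.head_cons, neg_smul]
    rw [h]
    abel
  obtain ⟨κ, a, z, hz, hrels⟩ :=
    Module.Flat.isTrivialRelation_of_sum_smul_eq_zero hsum
  refine ⟨ULift.{uR} (Fin κ), inferInstance, fun j => a ⟨0⟩ j.down, fun j => a ⟨1⟩ j.down,
    fun j => z j.down, ?_, ?_⟩
  · have h0 := hz ⟨0⟩
    simp only [Matrix.cons_val_zero] at h0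
    rw [h0]
    exact Fintype.sum_equiv Equiv.ulift.symm _ _ (fun _ => rfl)
  · intro j
    have h2 := hrels j.down
    rw [Fintype.sum_equiv (Equiv.ulift.{uR, 0})
      (fun i : ULift.{uR, 0} (Fin 2) => (![b₂, -b₁] i.down) * a i j.down)
      (fun i : Fin 2 => (![b₂, -b₁] i) * a ⟨i⟩ j.down) (fun i => rfl), Fin.sum_univ_two] at h2
    simp only [Matrix.cons_val_zero, Matrix.cons_val_one, Matrix.head_cons] at h2
    linear_combination h2

set_option maxHeartbeats 1000000
set_option synthInstance.maxHeartbeats 1000000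

/-- Lemma 2.1 (gcd step): if `B` is an affine domain over an algebraically closed
field `k` of characteristic `0` with locally nilpotent derivation `δ`, the kernel
`A` is a UFD, and `B` is faithfully flat over `A`, then the gcd of two nonzero
elements of the plinth ideal `δ(B) ∩ A` again lies in the plinth ideal. -/
theorem stmt8 {k B : Type*} [Field k] [IsAlgClosed k] [CharZero k]
    [CommRing B] [IsDomain B] [Algebra k B] [Algebra.FiniteType k B]
    (δ : Derivation k B B) (hln : ∀ b : B, ∃ n : ℕ, (⇑δ)^[n] b = 0)
    (A : Subalgebra k B) (hA : ∀ b : B, b ∈ A ↔ δ b = 0)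
    [UniqueFactorizationMonoid A] [Module.FaithfullyFlat A B]
    (a₁ a₂ : A) (h1 : (a₁ : B) ≠ 0) (h2 : (a₂ : B) ≠ 0)
    (hs1 : ∃ s : B, δ s = a₁) (hs2 : ∃ s : B, δ s = a₂)
    (d : A) (hd1 : d ∣ a₁) (hd2 : d ∣ a₂)
    (hdmax : ∀ e : A, e ∣ a₁ → e ∣ a₂ → e ∣ d) :
    ∃ s : B, δ s = d := by
  classical
  haveI : IsDomain A := inferInstance
  haveI : DecompositionMonoid A := inferInstance
  obtain ⟨s₁, hδ1⟩ := hs1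
  obtain ⟨s₂, hδ2⟩ := hs2
  obtain ⟨b₁, hb₁⟩ := hd1
  obtain ⟨b₂, hb₂⟩ := hd2
  -- basic nonvanishing
  have ha₁ : a₁ ≠ 0 := fun e => h1 (by rw [e]; rfl)
  have ha₂ : a₂ ≠ 0 := fun e => h2 (by rw [e]; rfl)
  have hd0 : d ≠ 0 := fun e => ha₁ (by rw [hb₁, e, zero_mul])
  have hb₁0 : b₁ ≠ 0 := fun e => ha₁ (by rw [hb₁, e, mul_zero])
  have hb₂0 : b₂ ≠ 0 := fun e => ha₂ (by rw [hb₂, e, mul_zero])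
  have hb₁B : (b₁ : B) ≠ 0 := fun e => hb₁0 (Subtype.ext e)
  -- δ vanishes on A
  have hδA : ∀ a : A, δ (a : B) = 0 := fun a => (hA a).mp a.2
  -- coprimality of b₁, b₂
  have hrel : IsRelPrime b₁ b₂ := by
    intro e he₁ he₂
    have h₁ : d * e ∣ a₁ := by rw [hb₁]; exact mul_dvd_mul_left d he₁
    have h₂ : d * e ∣ a₂ := by rw [hb₂]; exact mul_dvd_mul_left d he₂
    have hde : d * e ∣ d * 1 := by rw [mul_one]; exact hdmax (d * e) h₁ h₂
    exact isUnit_of_dvd_one ((mul_dvd_mul_iff_left hd0).mp hde)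
  -- the element w = b₂ s₁ - b₁ s₂ lies in A
  set w : B := (b₂ : B) * s₁ - (b₁ : B) * s₂ with hw
  have hδw : δ w = 0 := by
    have e₁ : ((a₁ : A) : B) = (d : B) * (b₁ : B) := by rw [hb₁]; rfl
    have e₂ : ((a₂ : A) : B) = (d : B) * (b₂ : B) := by rw [hb₂]; rfl
    simp only [hw, map_sub, Derivation.leibniz, smul_eq_mul, hδ1, hδ2, hδA, mul_zero, add_zero]
    rw [e₁, e₂]; ring
  set wA : A := ⟨w, (hA w).mpr hδw⟩ with hwA
  -- d * wA lies in the ideal (a₁, a₂) of A by faithfully flat descent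
  have hmem : d * wA ∈ Ideal.span ({a₁, a₂} : Set A) := by
    apply aux_mem_of_faithfullyFlat (B := B)
    have hcoe : algebraMap A B (d * wA) = (a₂ : B) * s₁ - (a₁ : B) * s₂ := by
      show ((d : B) * w) = _
      have e₁ : ((a₁ : A) : B) = (d : B) * (b₁ : B) := by rw [hb₁]; rfl
      have e₂ : ((a₂ : A) : B) = (d : B) * (b₂ : B) := by rw [hb₂]; rfl
      rw [hw, e₁, e₂]; ring
    rw [hcoe]
    have m₁ : (a₁ : B) ∈ (Ideal.span ({a₁, a₂} : Set A)).map (algebraMap A B) :=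
      Ideal.mem_map_of_mem _ (Ideal.subset_span (by simp))
    have m₂ : (a₂ : B) ∈ (Ideal.span ({a₁, a₂} : Set A)).map (algebraMap A B) :=
      Ideal.mem_map_of_mem _ (Ideal.subset_span (by simp))
    exact sub_mem (Ideal.mul_mem_right s₁ _ m₂) (Ideal.mul_mem_right s₂ _ m₁)
  obtain ⟨x, y, hxy⟩ := Ideal.mem_span_pair.mp hmem
  -- cancel d : wA = x*b₁ + y*b₂
  have hwxy : wA = x * b₁ + y * b₂ := by
    apply mul_left_cancel₀ hd0
    rw [← hxy, hb₁, hb₂]; ring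
  -- in B : b₂ • (s₁ - y) = b₁ • (s₂ + x)
  have hrelB : (b₂ : B) * (s₁ - (y : B)) - (b₁ : B) * (s₂ + (x : B)) = 0 := by
    have : w = (x : B) * (b₁ : B) + (y : B) * (b₂ : B) := by
      rw [show w = ((wA : A) : B) from rfl, hwxy]; push_cast; ring
    rw [hw] at this
    linear_combination this
  -- apply the equational criterion for flatness
  set t : B := s₁ - (y : B) with ht
  set u : B := s₂ + (x : B) with hu
  have hsmul : ∀ (a : A) (z : B), a • z = (a : B) * z := fun a z => Algebra.smul_def a z
  have hba : (b₂ : A) • t = b₁ • u := by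
    rw [hsmul, hsmul]
    linear_combination hrelB
  obtain ⟨κ, hκ, p, q, z, hz, hrels⟩ := aux_flat_pair b₁ b₂ t u hba
  -- each p j is divisible by b₁
  have hdvd : ∀ j, b₁ ∣ p j := by
    intro j
    have hdd : b₁ ∣ p j * b₂ := ⟨q j, by linear_combination (hrels j)⟩
    exact hrel.dvd_of_dvd_mul_right hdd
  choose c hc using hdvd
  refine ⟨∑ j, (c j : B) * z j, ?_⟩
  -- t = b₁ * s
  have hts : t = (b₁ : B) * ∑ j, (c j : B) * z j := by
    rw [hz, Finset.mul_sum]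
    refine Finset.sum_congr rfl fun j _ => ?_
    rw [hsmul, hc j]
    push_cast
    ring
  -- compute δ t
  have hδt : δ t = (a₁ : B) := by
    rw [ht, map_sub, hδ1, hδA, sub_zero]
  rw [hts, Derivation.leibniz, smul_eq_mul, smul_eq_mul, hδA, mul_zero, add_zero] at hδt
  apply mul_left_cancel₀ hb₁B
  rw [hδt, hb₁]
  push_cast
  ring
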